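/- For every real κ with 0 ≤ κ < 1, (1/(2π)) ∫₀^{2π} w_κ(θ) · log w_κ(θ) dθ = −log(1 − κ²), where w_κ(θ) = (1 − κ²) / (1 + κ² − 2κ cos θ). Equivalently, the Kullback–Leibler divergence of the wrapped Cauchy distribution with concentration κ from the uniform distribution on the circle equals −log(1 − κ²). -/

import Mathlib

open Real MeasureTheory intervalIntegral

private lemma circle_cauchy {f : ℂ → ℂ} (hf : DiffContOnCl ℂ f (Metric.ball 0 1)) {w : ℂ}
    (hw : w ∈ Metric.ball (0:ℂ) 1) :
    (∫ θ in (0:ℝ)..(2*π), Complex.exp (θ * Complex.I) * f (Complex.exp (θ * Complex.I)) /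
      (Complex.exp (θ * Complex.I) - w)) = 2 * π * f w := by
  have h := hf.circleIntegral_sub_inv_smul hw
  rw [circleIntegral] at h
  simp only [deriv_circleMap, circleMap, Complex.ofReal_one, one_mul, Complex.ofReal_zero,
    zero_add, smul_eq_mul] at h
  have h2 : (∫ θ in (0:ℝ)..(2*π), Complex.exp (θ * Complex.I) * Complex.I *
      ((Complex.exp (θ * Complex.I) - w)⁻¹ * f (Complex.exp (θ * Complex.I)))) =
      ∫ θ in (0:ℝ)..(2*π), Complex.I *
        (Complex.exp (θ * Complex.I) * f (Complex.exp (θ * Complex.I)) /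
          (Complex.exp (θ * Complex.I) - w)) := by
    congr 1; funext θ; ring
  rw [h2, intervalIntegral.integral_const_mul] at h
  apply mul_left_cancel₀ Complex.I_ne_zero
  rw [h]; ring

theorem kl_wrapped_cauchy (κ : ℝ) (hκ0 : 0 ≤ κ) (hκ1 : κ < 1) :
    (1 / (2 * π)) * ∫ θ in (0 : ℝ)..(2 * π),
        ((1 - κ ^ 2) / (1 + κ ^ 2 - 2 * κ * Real.cos θ)) *
          Real.log ((1 - κ ^ 2) / (1 + κ ^ 2 - 2 * κ * Real.cos θ)) =
      -Real.log (1 - κ ^ 2) := by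
  have hsq : 0 < 1 - κ ^ 2 := by nlinarith
  have hden : ∀ θ : ℝ, 0 < 1 + κ ^ 2 - 2 * κ * Real.cos θ := by
    intro θ
    nlinarith [Real.cos_le_one θ, Real.neg_one_le_cos θ, sq_nonneg (1 - κ)]
  -- the holomorphic function B
  set B : ℂ → ℂ := fun w => (Real.log (1 - κ ^ 2) : ℂ) - 2 * Complex.log (1 - κ * w) with hB
  -- basic nonvanishing facts
  have h1κz : ∀ w : ℂ, ‖w‖ ≤ 1 → 1 - (κ:ℂ) * w ≠ 0 := by
    intro w hw h
    rw [sub_eq_zero] at h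
    have : ‖(κ:ℂ) * w‖ ≤ κ := by
      rw [norm_mul, Complex.norm_real, Real.norm_eq_abs, abs_of_nonneg hκ0]
      nlinarith [norm_nonneg w]
    rw [← h, norm_one] at this
    linarith
  have hslit : ∀ w : ℂ, ‖w‖ ≤ 1 → (1 - (κ:ℂ) * w) ∈ Complex.slitPlane := by
    intro w hw
    refine Complex.mem_slitPlane_iff.2 (Or.inl ?_)
    have hre : (1 - (κ:ℂ) * w).re = 1 - κ * w.re := by simp
    rw [hre]
    have h1 : |w.re| ≤ 1 := le_trans (Complex.abs_re_le_norm w) hw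
    have := abs_le.1 h1
    nlinarith
  have hBdiff : DiffContOnCl ℂ B (Metric.ball 0 1) := by
    apply DifferentiableOn.diffContOnCl
    rw [closure_ball (0:ℂ) one_ne_zero]
    intro w hw
    have hw1 : ‖w‖ ≤ 1 := by
      rwa [Metric.mem_closedBall, Complex.dist_eq, sub_zero] at hw
    refine DifferentiableAt.differentiableWithinAt ?_
    refine (differentiableAt_const _).sub (DifferentiableAt.const_mul ?_ _)
    refine DifferentiableAt.clog ?_ (hslit w hw1)
    fun_prop
  set f1 : ℂ → ℂ := fun w => κ * w * B w / (1 - κ * w) with hf1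
  have hf1diff : DiffContOnCl ℂ f1 (Metric.ball 0 1) := by
    apply DifferentiableOn.diffContOnCl
    rw [closure_ball (0:ℂ) one_ne_zero]
    intro w hw
    have hw1 : ‖w‖ ≤ 1 := by
      rwa [Metric.mem_closedBall, Complex.dist_eq, sub_zero] at hw
    refine DifferentiableAt.differentiableWithinAt ?_
    refine DifferentiableAt.div ?_ (by fun_prop) (h1κz w hw1)
    refine DifferentiableAt.mul (by fun_prop) ?_
    refine (differentiableAt_const _).sub (DifferentiableAt.const_mul ?_ _)
    exact DifferentiableAt.clog (by fun_prop) (hslit w hw1)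
  -- abbreviations for the circle point
  have hzabs : ∀ θ : ℝ, ‖Complex.exp (θ * Complex.I)‖ = 1 := fun θ =>
    Complex.norm_exp_ofReal_mul_I θ
  have hz0 : ∀ θ : ℝ, Complex.exp (θ * Complex.I) ≠ 0 := fun θ => Complex.exp_ne_zero _
  have hzκ : ∀ θ : ℝ, Complex.exp (θ * Complex.I) - (κ:ℂ) ≠ 0 := by
    intro θ h
    rw [sub_eq_zero] at h
    have := hzabs θ
    rw [h, Complex.norm_real, Real.norm_eq_abs, abs_of_nonneg hκ0] at this
    linarith
  have h1κ : ∀ θ : ℝ, 1 - (κ:ℂ) * Complex.exp (θ * Complex.I) ≠ 0 := fun θ =>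
    h1κz _ (le_of_eq (hzabs θ))
  -- the complex integrand
  set F : ℝ → ℂ := fun θ =>
    (((1 - κ ^ 2) / (1 + κ ^ 2 - 2 * κ * Real.cos θ) : ℝ) : ℂ) *
      B (Complex.exp (θ * Complex.I)) with hF
  -- key pointwise decomposition
  have hkey : ∀ θ : ℝ, (Complex.exp (θ * Complex.I)) ^ 2 + 1 =
      2 * (Real.cos θ : ℂ) * Complex.exp (θ * Complex.I) := by
    intro θ
    have pyth : (Real.sin θ:ℂ)^2 + (Real.cos θ:ℂ)^2 = 1 := by
      exact_mod_cast Real.sin_sq_add_cos_sq θ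
    rw [Complex.exp_mul_I, ← Complex.ofReal_cos, ← Complex.ofReal_sin]
    linear_combination ((Real.sin θ:ℂ))^2 * Complex.I_sq - pyth
  have hFG : ∀ θ : ℝ, F θ =
      Complex.exp (θ * Complex.I) * B (Complex.exp (θ * Complex.I)) /
        (Complex.exp (θ * Complex.I) - (κ:ℂ)) +
      Complex.exp (θ * Complex.I) * f1 (Complex.exp (θ * Complex.I)) /
        (Complex.exp (θ * Complex.I) - 0) := by
    intro θ
    have hd : ((1:ℂ) + (κ:ℂ) ^ 2 - 2 * κ * Real.cos θ) ≠ 0 := by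
      have := (hden θ).ne'
      exact_mod_cast fun h => this (by exact_mod_cast h)
    have split : (((1 - κ ^ 2) / (1 + κ ^ 2 - 2 * κ * Real.cos θ) : ℝ) : ℂ) =
        Complex.exp (θ * Complex.I) / (Complex.exp (θ * Complex.I) - κ) +
          κ * Complex.exp (θ * Complex.I) / (1 - κ * Complex.exp (θ * Complex.I)) := by
      have e1 := hzκ θ
      have e2 := h1κ θ
      have e3 := hd
      have e4 := hkey θ
      push_cast at e3 e4 ⊢
      rw [div_add_div _ _ e1 e2, div_eq_div_iff e3 (mul_ne_zero e1 e2)]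
      linear_combination (-(κ:ℂ) * (1 - (κ:ℂ) ^ 2)) * e4
    simp only [hF]
    rw [sub_zero, split, add_mul]
    congr 1
    · ring
    · have hcancel : Complex.exp (θ * Complex.I) * f1 (Complex.exp (θ * Complex.I)) /
          Complex.exp (θ * Complex.I) = f1 (Complex.exp (θ * Complex.I)) := by
        rw [mul_comm, mul_div_assoc, div_self (hz0 θ), mul_one]
      rw [hcancel, hf1]
      ring
  -- continuity facts
  have hce : Continuous fun θ : ℝ => Complex.exp ((θ:ℂ) * Complex.I) := by fun_prop
  have hcont : Continuous fun θ : ℝ => B (Complex.exp (θ * Complex.I)) := by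
    rw [hB]
    refine Continuous.sub continuous_const (Continuous.mul continuous_const ?_)
    refine Continuous.clog (by fun_prop) ?_
    intro θ
    exact hslit _ (le_of_eq (hzabs θ))
  have hcG1 : Continuous fun θ : ℝ => Complex.exp (θ * Complex.I) *
      B (Complex.exp (θ * Complex.I)) / (Complex.exp (θ * Complex.I) - (κ:ℂ)) :=
    Continuous.div (hce.mul hcont) (hce.sub continuous_const) hzκ
  have hcf1 : Continuous fun θ : ℝ => f1 (Complex.exp (θ * Complex.I)) := by
    rw [hf1]
    exact Continuous.div ((continuous_const.mul hce).mul hcont)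
      (continuous_const.sub (continuous_const.mul hce)) h1κ
  have hcG2 : Continuous fun θ : ℝ => Complex.exp (θ * Complex.I) *
      f1 (Complex.exp (θ * Complex.I)) / (Complex.exp (θ * Complex.I) - 0) := by
    simp only [sub_zero]
    exact Continuous.div (hce.mul hcf1) hce hz0
  -- evaluate the complex integral
  have hκmem : ((κ:ℂ)) ∈ Metric.ball (0:ℂ) 1 := by
    rw [Metric.mem_ball, Complex.dist_eq, sub_zero, Complex.norm_real, Real.norm_eq_abs, abs_of_nonneg hκ0]
    exact hκ1
  have h0mem : ((0:ℂ)) ∈ Metric.ball (0:ℂ) 1 := Metric.mem_ball_self one_pos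
  have hI1 := circle_cauchy hBdiff hκmem
  have hI2 := circle_cauchy hf1diff h0mem
  have hf10 : f1 0 = 0 := by rw [hf1]; simp
  have hIF : (∫ θ in (0:ℝ)..(2*π), F θ) = 2 * π * B κ := by
    rw [intervalIntegral.integral_congr (g := fun θ =>
      Complex.exp (θ * Complex.I) * B (Complex.exp (θ * Complex.I)) /
        (Complex.exp (θ * Complex.I) - (κ:ℂ)) +
      Complex.exp (θ * Complex.I) * f1 (Complex.exp (θ * Complex.I)) /
        (Complex.exp (θ * Complex.I) - 0)) (fun θ _ => hFG θ)]
    rw [intervalIntegral.integral_add (hcG1.intervalIntegrable _ _)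
      (hcG2.intervalIntegrable _ _), hI1, hI2, hf10]
    ring
  -- the real integrand is the real part of F
  have habs : ∀ θ : ℝ, Complex.normSq (1 - κ * Complex.exp (θ * Complex.I)) =
      1 + κ ^ 2 - 2 * κ * Real.cos θ := by
    intro θ
    have pyth := Real.sin_sq_add_cos_sq θ
    simp [Complex.normSq_apply, Complex.exp_ofReal_mul_I_re, Complex.exp_ofReal_mul_I_im]
    ring_nf
    nlinarith [pyth]
  have hre : ∀ θ : ℝ, ((1 - κ ^ 2) / (1 + κ ^ 2 - 2 * κ * Real.cos θ)) *
      Real.log ((1 - κ ^ 2) / (1 + κ ^ 2 - 2 * κ * Real.cos θ)) = (F θ).re := by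
    intro θ
    have h2log : 2 * (Complex.log (1 - κ * Complex.exp (θ * Complex.I))).re =
        Real.log (1 + κ ^ 2 - 2 * κ * Real.cos θ) := by
      rw [Complex.log_re, ← habs θ, ← Complex.sq_norm, Real.log_pow]
      push_cast
      ring
    have hPre : (F θ).re = ((1 - κ ^ 2) / (1 + κ ^ 2 - 2 * κ * Real.cos θ)) *
        (Real.log (1 - κ ^ 2) - 2 * (Complex.log (1 - κ * Complex.exp (θ * Complex.I))).re) := by
      rw [hF, hB]
      simp only []
      rw [show ((Real.log (1 - κ ^ 2) : ℂ) - 2 * Complex.log (1 - κ * Complex.exp (θ * Complex.I)))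
        = B (Complex.exp (θ * Complex.I)) from rfl]
      rw [Complex.mul_re, Complex.ofReal_re, Complex.ofReal_im, zero_mul, sub_zero, hB]
      simp [Complex.sub_re, Complex.ofReal_re, Complex.mul_re]
    rw [hPre, h2log, Real.log_div (ne_of_gt hsq) (hden θ).ne']
  have hcF : Continuous F := by
    rw [hF]
    refine Continuous.mul ?_ hcont
    exact Complex.continuous_ofReal.comp
      (Continuous.div continuous_const (by fun_prop) (fun θ => (hden θ).ne'))
  have hreal : (∫ θ in (0:ℝ)..(2*π),
      ((1 - κ ^ 2) / (1 + κ ^ 2 - 2 * κ * Real.cos θ)) *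
        Real.log ((1 - κ ^ 2) / (1 + κ ^ 2 - 2 * κ * Real.cos θ))) =
      (∫ θ in (0:ℝ)..(2*π), F θ).re := by
    rw [intervalIntegral.integral_congr (g := fun θ => (F θ).re) (fun θ _ => hre θ)]
    exact (Complex.reCLM.intervalIntegral_comp_comm (hcF.intervalIntegrable _ _))
  rw [hreal, hIF]
  have hBκ : (B κ).re = -Real.log (1 - κ ^ 2) := by
    have : ((1:ℂ) - κ * κ) = ((1 - κ ^ 2 : ℝ) : ℂ) := by push_cast; ring
    rw [hB]
    simp only [this]
    rw [← Complex.ofReal_log (le_of_lt hsq)]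
    simp
    ring
  have h2π : (2 * (π:ℂ) * B (κ:ℂ)).re = 2 * π * (B (κ:ℂ)).re := by
    have : (2 * (π:ℂ)) = ((2 * π : ℝ) : ℂ) := by push_cast; ring
    rw [this, Complex.mul_re, Complex.ofReal_re, Complex.ofReal_im, zero_mul, sub_zero]
  rw [h2π, hBκ]
  field_simp
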